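/- (Main theorem, combinatorial form.) For every integer partition λ and every real number α, the signed sum of principal lower hook products over all column deletions of λ equals the λ-Jack derangement number: Σ_{I ⊆ {1,…,λ₁}} (−1)^{|I|} · Π_{j ∉ I} ( α(λ₁ − j − #{i ∈ I : i > j}) + λ′_j ) = Σ_{k=1}^{λ₁} d^λ_k α^{λ₁−k} = D^λ_α. -/

import Mathlib

open Finset

/-- The conjugate partition: `conjP L j = λ′_j = #{i : λ_i ≥ j}`. -/
def conjP (L : List ℕ) (j : ℕ) : ℕ := (L.filter (fun p => decide (j ≤ p))).length

/-- `L` is the list of parts of an integer partition (weakly decreasing, positive parts). -/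
def IsPartition (L : List ℕ) : Prop := L.Pairwise (· ≥ ·) ∧ ∀ p ∈ L, 0 < p

/-- Colored permutations of shape `L`: a coloring `c` of the symbols `1,…,λ₁` (represented by
`Fin λ₁`, symbol `i` being `i.1 + 1`) with `1 ≤ c i ≤ λ′_i`, together with a permutation whose
cycles are monochromatic. -/
def ColoredPerms (L : List ℕ) :
    Set ((Fin L.headI → ℕ) × Equiv.Perm (Fin L.headI)) :=
  {x | (∀ i, 1 ≤ x.1 i ∧ x.1 i ≤ conjP L (i.1 + 1)) ∧ ∀ i, x.1 (x.2 i) = x.1 i}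

/-- Colored derangements of shape `L`: colored permutations such that `σ i = i → c i ≠ 1`. -/
def ColoredDerangements (L : List ℕ) :
    Set ((Fin L.headI → ℕ) × Equiv.Perm (Fin L.headI)) :=
  {x | x ∈ ColoredPerms L ∧ ∀ i, x.2 i = i → x.1 i ≠ 1}

/-- Number of cycles of a permutation in its disjoint cycle decomposition,
fixed points counting as cycles. -/
noncomputable def cycleCount {m : ℕ} (σ : Equiv.Perm (Fin m)) : ℕ :=
  σ.cycleType.card + (Finset.univ.filter fun i => σ i = i).card

/-- `dCount L k` : the number `d^λ_k` of colored derangements of shape `L`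
whose permutation has exactly `k` cycles. -/
noncomputable def dCount (L : List ℕ) (k : ℕ) : ℕ :=
  Set.ncard {x | x ∈ ColoredDerangements L ∧ cycleCount x.2 = k}

/-- The λ-Jack derangement number `D^λ_α = Σ_{k=1}^{λ₁} d^λ_k α^{λ₁−k}`. -/
noncomputable def JackD (L : List ℕ) (α : ℝ) : ℝ :=
  ∑ k ∈ Finset.Icc 1 L.headI, (dCount L k : ℝ) * α ^ (L.headI - k)

/-- Block (0-based) of a point of `{1,…,2m}` (points represented by `Fin (2m)`,
point `p` being `p.1 + 1`; the block of `p` is `k` iff `p ∈ {2k−1, 2k}` 1-based). -/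
def blk {m : ℕ} (p : Fin (2 * m)) : Fin m := ⟨p.1 / 2, by have := p.2; omega⟩

/-- Colored perfect matchings of shape `L`: a perfect matching of `{1,…,2λ₁}` (a
fixed-point-free involution) together with a coloring `c` of the blocks `{2k−1,2k}` with
`1 ≤ c_k ≤ λ′_k`, such that matched points lie in blocks of the same color. -/
def ColoredMatchings (L : List ℕ) :
    Set ((Fin L.headI → ℕ) × Equiv.Perm (Fin (2 * L.headI))) :=
  {x | Function.Involutive x.2 ∧ (∀ p, x.2 p ≠ p) ∧
        (∀ k, 1 ≤ x.1 k ∧ x.1 k ≤ conjP L (k.1 + 1)) ∧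
        (∀ p, x.1 (blk (x.2 p)) = x.1 (blk p))}

/-- Colored perfect matching derangements of shape `L`: colored perfect matchings such that
whenever a block `{2k−1,2k}` is itself a pair of the matching, its color is not `1`. -/
def ColoredMatchDerangements (L : List ℕ) :
    Set ((Fin L.headI → ℕ) × Equiv.Perm (Fin (2 * L.headI))) :=
  {x | x ∈ ColoredMatchings L ∧ ∀ p, blk (x.2 p) = blk p → x.1 (blk p) ≠ 1}

/-- The principal lower hook length `h_j = α(λ₁ − j) + λ′_j` of the cell `(1,j)`. -/
noncomputable def hlow (L : List ℕ) (α : ℝ) (j : ℕ) : ℝ :=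
  α * ((L.headI : ℝ) - (j : ℝ)) + (conjP L j : ℝ)

/-- `fixPtCount m k` : the number `d_{m,k}` of permutations of `{1,…,m}` with exactly
`k` fixed points. -/
noncomputable def fixPtCount (m k : ℕ) : ℕ :=
  Set.ncard {σ : Equiv.Perm (Fin m) | (Finset.univ.filter fun i => σ i = i).card = k}

/-- `Ematch m` : the number of perfect matchings of `{1,…,2m}` containing none of the base
pairs `{2t−1, 2t}`. -/
noncomputable def Ematch (m : ℕ) : ℕ :=
  Set.ncard {σ : Equiv.Perm (Fin (2 * m)) |
    Function.Involutive σ ∧ (∀ p, σ p ≠ p) ∧ ∀ p, (σ p).1 / 2 ≠ p.1 / 2}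

open Finset Equiv Equiv.Perm

variable {β : Type*} [Fintype β] [DecidableEq β]

/-- weight of a permutation: `α ^ (#support − #cycles-of-cycleType)`. -/
noncomputable def Wt (α : ℝ) (σ : Perm β) : ℝ :=
  α ^ (σ.support.card - Multiset.card σ.cycleType)

lemma card_cycleType_le_card_support (σ : Perm β) :
    Multiset.card σ.cycleType ≤ σ.support.card := by
  rw [← Equiv.Perm.sum_cycleType]
  have := Multiset.card_nsmul_le_sum (s := σ.cycleType) (a := 1)
    (fun x hx => le_trans one_le_two (Equiv.Perm.two_le_of_mem_cycleType hx))
  simpa using this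

lemma Wt_one (α : ℝ) : Wt α (1 : Perm β) = 1 := by
  simp [Wt]

lemma support_swap_mul (τ : Perm β) {a b : β} (ha : τ a = a) (hab : a ≠ b) (hb : τ b ≠ b) :
    (swap a b * τ).support = insert a τ.support := by
  ext x
  simp only [Equiv.Perm.mem_support, Equiv.Perm.mul_apply, Finset.mem_insert]
  constructor
  · intro hx
    by_cases hxa : x = a
    · exact Or.inl hxa
    right
    intro hτx
    rw [hτx] at hx
    rcases eq_or_ne x b with rfl | hxb
    · exact hb hτx
    · exact hx (swap_apply_of_ne_of_ne hxa hxb)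
  · rintro (rfl | hx)
    · rw [ha, swap_apply_left]; exact fun h => hab h.symm
    · intro hcon
      rcases eq_or_ne (τ x) a with hta | hta
      · have : x = a := τ.injective (by rw [hta, ha])
        rw [this, ha, swap_apply_left] at hcon
        exact hab hcon.symm
      rcases eq_or_ne (τ x) b with htb | htb
      · rw [htb, swap_apply_right] at hcon
        rw [← hcon, ha] at htb
        exact hab htb
      · rw [swap_apply_of_ne_of_ne hta htb] at hcon
        exact hx hcon

lemma isCycle_swap_mul_of {γ : Perm β} (hγ : γ.IsCycle) {a b : β}
    (ha : γ a = a) (hab : a ≠ b) (hb : γ b ≠ b) : (swap a b * γ).IsCycle := by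
  have hπa : (swap a b * γ) a = b := by rw [Equiv.Perm.mul_apply, ha, swap_apply_left]
  refine ⟨a, by rw [hπa]; exact fun h => hab h.symm, ?_⟩
  intro y hy
  have hy' : y = a ∨ γ y ≠ y := by
    have := (support_swap_mul γ ha hab hb) ▸ (Equiv.Perm.mem_support.2 hy)
    simpa using this
  have key : ∀ k : ℕ, (swap a b * γ).SameCycle a ((γ ^ k) b) := by
    intro k
    induction k with
    | zero => exact ⟨1, by simpa using hπa⟩
    | succ k ih =>
      rcases eq_or_ne ((γ ^ (k+1)) b) b with hk | hk
      · rw [hk]; exact ⟨1, by simpa using hπa⟩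
      · have hne_a : (γ ^ (k+1)) b ≠ a := by
          intro hcon
          have : (γ ^ (k+1)) a = a := by
            clear hcon hk ih
            induction (k+1) with
            | zero => simp
            | succ k ih => rw [pow_succ, Equiv.Perm.mul_apply, ha, ih]
          exact hab ((γ ^ (k+1)).injective (hcon.trans this.symm)).symm
        have step : (swap a b * γ) ((γ ^ k) b) = (γ ^ (k+1)) b := by
          rw [Equiv.Perm.mul_apply, ← Equiv.Perm.mul_apply γ (γ ^ k), ← pow_succ']
          exact swap_apply_of_ne_of_ne hne_a hk
        exact ih.trans ⟨1, by simpa using step⟩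
  rcases hy' with rfl | hy'
  · exact Equiv.Perm.SameCycle.refl _ _
  · obtain ⟨k, _, hk⟩ := (hγ.sameCycle hb hy').exists_pow_eq'
    exact hk ▸ key k
lemma card_cycleType_eq_card_factors (σ : Perm β) :
    Multiset.card σ.cycleType = σ.cycleFactorsFinset.card := by
  rw [Equiv.Perm.cycleType_def, Multiset.card_map]; rfl

lemma cycleType_card_swap_mul_fix {τ : Perm β} {a b : β}
    (ha : τ a = a) (hab : a ≠ b) (hb : τ b = b) :
    Multiset.card (swap a b * τ).cycleType = Multiset.card τ.cycleType + 1 ∧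
      (swap a b * τ).support.card = τ.support.card + 2 := by
  have hd : (swap a b).Disjoint τ := by
    intro x
    rcases eq_or_ne x a with rfl | hxa
    · exact Or.inr ha
    rcases eq_or_ne x b with rfl | hxb
    · exact Or.inr hb
    · exact Or.inl (swap_apply_of_ne_of_ne hxa hxb)
  constructor
  · rw [Equiv.Perm.Disjoint.cycleType_mul hd, (isCycle_swap hab).cycleType, Equiv.Perm.card_support_swap hab]
    simp [add_comm]
  · rw [hd.card_support_mul, Equiv.Perm.card_support_swap hab, add_comm]

lemma cycleType_card_swap_mul_move {τ : Perm β} {a b : β}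
    (ha : τ a = a) (hab : a ≠ b) (hb : τ b ≠ b) :
    Multiset.card (swap a b * τ).cycleType = Multiset.card τ.cycleType ∧
      (swap a b * τ).support.card = τ.support.card + 1 := by
  classical
  set γ : Perm β := τ.cycleOf b with hγdef
  have hγS : γ ∈ τ.cycleFactorsFinset :=
    Equiv.Perm.cycleOf_mem_cycleFactorsFinset_iff.2 (Equiv.Perm.mem_support.2 hb)
  have hγc : γ.IsCycle := Equiv.Perm.isCycle_cycleOf τ hb
  have haτ : a ∉ τ.support := by simp [Equiv.Perm.mem_support, ha]
  have hγa : γ a = a := by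
    have : a ∉ γ.support := fun h => haτ (Equiv.Perm.support_cycleOf_le τ b h)
    simpa [Equiv.Perm.mem_support, not_not] using this
  have hγb : γ b ≠ b := by rw [Equiv.Perm.cycleOf_apply_self]; exact hb
  set γ' : Perm β := swap a b * γ with hγ'def
  have hγ'c : γ'.IsCycle := isCycle_swap_mul_of hγc hγa hab hγb
  have hγ'supp : γ'.support = insert a γ.support := support_swap_mul γ hγa hab hγb
  have haγ' : a ∈ γ'.support := by rw [hγ'supp]; exact Finset.mem_insert_self _ _
  have hfact_supp : ∀ c ∈ τ.cycleFactorsFinset, a ∉ c.support :=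
    fun c hc h => haτ (Equiv.Perm.mem_cycleFactorsFinset_support_le hc h)
  have hγ'notmem : γ' ∉ τ.cycleFactorsFinset.erase γ := by
    intro h
    exact hfact_supp γ' (Finset.mem_of_mem_erase h) haγ'
  -- pairwise disjointness of the new factor set
  have hpd : ((insert γ' (τ.cycleFactorsFinset.erase γ) : Finset (Perm β)) :
      Set (Perm β)).Pairwise Equiv.Perm.Disjoint := by
    have hpdτ := Equiv.Perm.cycleFactorsFinset_pairwise_disjoint τ
    intro x hx y hy hxy
    simp only [Finset.coe_insert, Set.mem_insert_iff, Finset.mem_coe] at hx hy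
    have hdisj : ∀ c ∈ τ.cycleFactorsFinset.erase γ, γ'.Disjoint c := by
      intro c hc
      have hcS := Finset.mem_of_mem_erase hc
      have hcγ : c ≠ γ := Finset.ne_of_mem_erase hc
      have h1 : Equiv.Perm.Disjoint γ c := hpdτ hγS hcS (Ne.symm hcγ)
      rw [Equiv.Perm.disjoint_iff_disjoint_support] at h1 ⊢
      rw [hγ'supp]
      rw [Finset.disjoint_insert_left]
      exact ⟨hfact_supp c hcS, h1⟩
    rcases hx with rfl | hx
    · rcases hy with rfl | hy
      · exact absurd rfl hxy
      · exact hdisj y hy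
    · rcases hy with rfl | hy
      · exact (hdisj x hx).symm
      · exact hpdτ (Finset.mem_of_mem_erase hx) (Finset.mem_of_mem_erase hy) hxy
  have hfactors : (swap a b * τ).cycleFactorsFinset = insert γ' (τ.cycleFactorsFinset.erase γ) := by
    rw [Equiv.Perm.cycleFactorsFinset_eq_finset]
    refine ⟨?_, hpd, ?_⟩
    · intro f hf
      rcases Finset.mem_insert.1 hf with rfl | hf
      · exact hγ'c
      · exact (Equiv.Perm.mem_cycleFactorsFinset_iff.1 (Finset.mem_of_mem_erase hf)).1
    · have hcomm2 : ((insert γ (τ.cycleFactorsFinset.erase γ) : Finset (Perm β)) :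
          Set (Perm β)).Pairwise (Function.onFun Commute id) := by
        rw [Finset.insert_erase hγS]
        exact Equiv.Perm.cycleFactorsFinset_mem_commute τ
      have h2 := Finset.noncommProd_insert_of_notMem (τ.cycleFactorsFinset.erase γ) γ id hcomm2
        (Finset.notMem_erase γ _)
      have h3 : (insert γ (τ.cycleFactorsFinset.erase γ)).noncommProd id hcomm2 = τ := by
        rw [Finset.noncommProd_congr (Finset.insert_erase hγS) (fun x _ => rfl)]
        exact Equiv.Perm.cycleFactorsFinset_noncommProd τ
      have h4 := h2 ▸ h3
      rw [Finset.noncommProd_insert_of_notMem _ _ _ _ hγ'notmem]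
      exact (mul_assoc (swap a b) γ _).trans (congrArg (fun z => swap a b * z) h4)
  constructor
  · rw [card_cycleType_eq_card_factors, card_cycleType_eq_card_factors, hfactors,
      Finset.card_insert_of_notMem hγ'notmem, Finset.card_erase_of_mem hγS]
    have : 1 ≤ τ.cycleFactorsFinset.card := Finset.card_pos.2 ⟨γ, hγS⟩
    omega
  · rw [support_swap_mul τ ha hab hb, Finset.card_insert_of_notMem haτ]

lemma Wt_swap_mul (α : ℝ) (τ : Perm β) {a b : β} (ha : τ a = a) (hab : a ≠ b) :
    Wt α (swap a b * τ) = α * Wt α τ := by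
  have hle := card_cycleType_le_card_support τ
  rcases eq_or_ne (τ b) b with hb | hb
  · obtain ⟨h1, h2⟩ := cycleType_card_swap_mul_fix ha hab hb
    rw [Wt, Wt, h1, h2]
    rw [show τ.support.card + 2 - (Multiset.card τ.cycleType + 1)
      = (τ.support.card - Multiset.card τ.cycleType) + 1 by omega, pow_succ]
    ring
  · obtain ⟨h1, h2⟩ := cycleType_card_swap_mul_move ha hab hb
    rw [Wt, Wt, h1, h2]
    rw [show τ.support.card + 1 - Multiset.card τ.cycleType
      = (τ.support.card - Multiset.card τ.cycleType) + 1 by omega, pow_succ]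
    ring

/-- the equiv `Fin n ≃ {x : Fin (n+1) // x ≠ 0}` given by `succ`. -/
def finSuccNeZero (n : ℕ) : Fin n ≃ {x : Fin (n + 1) // x ≠ 0} where
  toFun i := ⟨i.succ, Fin.succ_ne_zero i⟩
  invFun x := x.1.pred x.2
  left_inv i := by simp
  right_inv x := by
    ext
    simp

lemma decomposeFin_symm_zero_eq {n : ℕ} (e : Perm (Fin n)) :
    Equiv.Perm.decomposeFin.symm (0, e) = e.extendDomain (finSuccNeZero n) := by
  refine Equiv.ext fun x => Fin.cases ?_ (fun i => ?_) x
  · rw [Equiv.Perm.decomposeFin_symm_apply_zero,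
      Equiv.Perm.extendDomain_apply_not_subtype _ _ (by simp)]
  · rw [Equiv.Perm.decomposeFin_symm_apply_succ,
      e.extendDomain_apply_subtype (finSuccNeZero n) (Fin.succ_ne_zero i)]
    simp [finSuccNeZero]

lemma Wt_decomposeFin_zero (α : ℝ) {n : ℕ} (e : Perm (Fin n)) :
    Wt α (Equiv.Perm.decomposeFin.symm (0, e)) = Wt α e := by
  rw [decomposeFin_symm_zero_eq, Wt, Wt, Equiv.Perm.card_support_extend_domain,
    Equiv.Perm.cycleType_extendDomain]

lemma Wt_decomposeFin_succ (α : ℝ) {n : ℕ} (e : Perm (Fin n)) (q : Fin n) :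
    Wt α (Equiv.Perm.decomposeFin.symm (q.succ, e)) = α * Wt α e := by
  have hdec : Equiv.Perm.decomposeFin.symm (q.succ, e)
      = swap 0 q.succ * Equiv.Perm.decomposeFin.symm (0, e) := by
    refine Equiv.ext fun x => Fin.cases ?_ (fun i => ?_) x
    · rw [Equiv.Perm.decomposeFin_symm_apply_zero, Equiv.Perm.mul_apply,
        Equiv.Perm.decomposeFin_symm_apply_zero, swap_apply_left]
    · rw [Equiv.Perm.decomposeFin_symm_apply_succ, Equiv.Perm.mul_apply,
        Equiv.Perm.decomposeFin_symm_apply_succ]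
      simp
  rw [hdec, Wt_swap_mul α _ (by
      rw [Equiv.Perm.decomposeFin_symm_apply_zero]) (Fin.succ_ne_zero q).symm,
    Wt_decomposeFin_zero]

lemma sum_piFinset_succ {M : Type*} [AddCommMonoid M] {n : ℕ} (w : Fin (n + 1) → ℕ)
    (g : (Fin (n + 1) → ℕ) → M) :
    ∑ c ∈ Fintype.piFinset (fun i => Finset.Icc 1 (w i)), g c
      = ∑ c₀ ∈ Finset.Icc 1 (w 0),
          ∑ c' ∈ Fintype.piFinset (fun i : Fin n => Finset.Icc 1 (w i.succ)),
            g (Fin.cons c₀ c') := by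
  rw [← Finset.sum_product']
  refine Finset.sum_nbij' (fun c => (c 0, Fin.tail c)) (fun p => Fin.cons p.1 p.2)
    ?_ ?_ ?_ ?_ ?_
  · intro c hc
    rw [Fintype.mem_piFinset] at hc
    rw [Finset.mem_product]
    exact ⟨hc 0, Fintype.mem_piFinset.2 fun i => hc i.succ⟩
  · intro p hp
    rw [Finset.mem_product] at hp
    rw [Fintype.mem_piFinset]
    intro i
    refine Fin.cases ?_ (fun j => ?_) i
    · simpa using hp.1
    · simpa using Fintype.mem_piFinset.1 hp.2 j
  · intro c _; exact Fin.cons_self_tail c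
  · intro p _; simp
  · intro c _; rw [Fin.cons_self_tail]

lemma erase_zero_eq_map {n : ℕ} (P : Finset (Fin (n + 1))) :
    P.erase 0 = (Finset.univ.filter (fun i : Fin n => i.succ ∈ P)).map
      ⟨Fin.succ, Fin.succ_injective n⟩ := by
  ext x
  simp only [Finset.mem_erase, Finset.mem_map, Finset.mem_filter, Finset.mem_univ, true_and,
    Function.Embedding.coeFn_mk, ne_eq]
  constructor
  · rintro ⟨hx0, hxP⟩
    obtain ⟨a, rfl⟩ := Fin.exists_succ_eq.2 hx0
    exact ⟨a, hxP, rfl⟩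
  · rintro ⟨a, haP, rfl⟩
    exact ⟨Fin.succ_ne_zero a, haP⟩

lemma filter_map_succ_card {n : ℕ} (Q : Finset (Fin n)) (i : Fin n) :
    ((Q.map ⟨Fin.succ, Fin.succ_injective n⟩).filter (fun j => i.succ < j)).card
      = (Q.filter (fun j => i < j)).card := by
  rw [Finset.filter_map, Finset.card_map]
  congr 1
  apply Finset.filter_congr
  intro j _
  simp [Fin.succ_lt_succ_iff]

lemma swap_zero_succ_apply_succ {n : ℕ} (q y : Fin n) :
    swap (0 : Fin (n + 1)) q.succ y.succ = if y = q then 0 else y.succ := by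
  rcases eq_or_ne y q with rfl | h
  · simp [swap_apply_right]
  · rw [if_neg h]
    exact swap_apply_of_ne_of_ne (Fin.succ_ne_zero y) (fun hc => h (Fin.succ_inj.1 hc))

section CondLemmas

variable {n : ℕ} (P : Finset (Fin (n + 1))) (e : Equiv.Perm (Fin n)) (c₀ : ℕ) (c' : Fin n → ℕ)

lemma cond_zero_iff :
    ((∀ i, (Fin.cons c₀ c' : Fin (n + 1) → ℕ) ((Equiv.Perm.decomposeFin.symm (0, e)) i)
        = (Fin.cons c₀ c' : Fin (n + 1) → ℕ) i) ∧
      (∀ i, i ∉ P → (Equiv.Perm.decomposeFin.symm (0, e)) i = i ∧ (Fin.cons c₀ c' : Fin (n + 1) → ℕ) i = 1))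
    ↔ (((0 : Fin (n + 1)) ∉ P → c₀ = 1) ∧
        ((∀ i, c' (e i) = c' i) ∧
          (∀ i, i ∉ Finset.univ.filter (fun i : Fin n => i.succ ∈ P) → e i = i ∧ c' i = 1))) := by
  have h0 : (Equiv.Perm.decomposeFin.symm (0, e)) (0 : Fin (n + 1)) = 0 :=
    Equiv.Perm.decomposeFin_symm_apply_zero 0 e
  have hs : ∀ i : Fin n, (Equiv.Perm.decomposeFin.symm (0, e)) i.succ = (e i).succ := by
    intro i
    rw [Equiv.Perm.decomposeFin_symm_apply_succ]
    simp
  constructor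
  · rintro ⟨h1, h2⟩
    refine ⟨fun hnP => ?_, fun i => ?_, fun i hi => ?_⟩
    · have := (h2 0 hnP).2
      rwa [Fin.cons_zero] at this
    · have := h1 i.succ
      rwa [hs, Fin.cons_succ, Fin.cons_succ] at this
    · rw [Finset.mem_filter] at hi
      push_neg at hi
      have := h2 i.succ (hi (Finset.mem_univ _))
      rw [hs, Fin.cons_succ] at this
      exact ⟨Fin.succ_inj.1 this.1, this.2⟩
  · rintro ⟨h0', h1, h2⟩
    constructor
    · intro i
      refine Fin.cases ?_ (fun j => ?_) i
      · rw [h0]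
      · rw [hs, Fin.cons_succ, Fin.cons_succ]
        exact h1 j
    · intro i hi
      refine Fin.cases (fun hi0 => ?_) (fun j hj => ?_) i hi
      · rw [h0, Fin.cons_zero]
        exact ⟨rfl, h0' hi0⟩
      · have hj' : j ∉ Finset.univ.filter (fun i : Fin n => i.succ ∈ P) := by
          rw [Finset.mem_filter]
          push_neg
          intro _; exact hj
        obtain ⟨he, hc⟩ := h2 j hj'
        rw [hs, Fin.cons_succ, he]
        exact ⟨rfl, hc⟩

lemma cond_succ_iff (q : Fin n) :
    ((∀ i, (Fin.cons c₀ c' : Fin (n + 1) → ℕ) ((Equiv.Perm.decomposeFin.symm (q.succ, e)) i)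
        = (Fin.cons c₀ c' : Fin (n + 1) → ℕ) i) ∧
      (∀ i, i ∉ P → (Equiv.Perm.decomposeFin.symm (q.succ, e)) i = i ∧ (Fin.cons c₀ c' : Fin (n + 1) → ℕ) i = 1))
    ↔ ((0 : Fin (n + 1)) ∈ P ∧ q.succ ∈ P ∧ c₀ = c' q ∧
        ((∀ i, c' (e i) = c' i) ∧
          (∀ i, i ∉ Finset.univ.filter (fun i : Fin n => i.succ ∈ P) → e i = i ∧ c' i = 1))) := by
  have h0 : (Equiv.Perm.decomposeFin.symm (q.succ, e)) (0 : Fin (n + 1)) = q.succ :=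
    Equiv.Perm.decomposeFin_symm_apply_zero q.succ e
  have hs : ∀ i : Fin n, (Equiv.Perm.decomposeFin.symm (q.succ, e)) i.succ
      = if e i = q then 0 else (e i).succ := by
    intro i
    rw [Equiv.Perm.decomposeFin_symm_apply_succ, swap_zero_succ_apply_succ]
  constructor
  · rintro ⟨h1, h2⟩
    have hP0 : (0 : Fin (n + 1)) ∈ P := by
      by_contra hc
      exact Fin.succ_ne_zero q ((h0.symm.trans (h2 0 hc).1))
    have hPq : q.succ ∈ P := by
      by_contra hc
      have := (h2 q.succ hc).1
      rw [hs] at this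
      rcases eq_or_ne (e q) q with heq | heq
      · rw [if_pos heq] at this
        exact Fin.succ_ne_zero q this.symm
      · rw [if_neg heq] at this
        exact heq (Fin.succ_inj.1 this)
    have hcc : c₀ = c' q := by
      have := h1 0
      rw [h0, Fin.cons_succ, Fin.cons_zero] at this
      exact this.symm
    refine ⟨hP0, hPq, hcc, fun i => ?_, fun i hi => ?_⟩
    · have := h1 i.succ
      rw [hs, Fin.cons_succ] at this
      rcases eq_or_ne (e i) q with heq | heq
      · rw [if_pos heq, Fin.cons_zero] at this
        rw [heq, ← hcc, this]
      · rwa [if_neg heq, Fin.cons_succ] at this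
    · rw [Finset.mem_filter] at hi
      push_neg at hi
      have := h2 i.succ (hi (Finset.mem_univ _))
      rw [hs, Fin.cons_succ] at this
      rcases eq_or_ne (e i) q with heq | heq
      · rw [if_pos heq] at this
        exact absurd this.1.symm (Fin.succ_ne_zero i)
      · rw [if_neg heq] at this
        exact ⟨Fin.succ_inj.1 this.1, this.2⟩
  · rintro ⟨hP0, hPq, hcc, h1, h2⟩
    have hqP' : ∀ i : Fin n, i ∉ Finset.univ.filter (fun i : Fin n => i.succ ∈ P) → i ≠ q := by
      intro i hi hiq
      rw [Finset.mem_filter] at hi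
      push_neg at hi
      exact (hi (Finset.mem_univ _)) (hiq ▸ hPq)
    constructor
    · intro i
      refine Fin.cases ?_ (fun j => ?_) i
      · rw [h0, Fin.cons_succ, Fin.cons_zero, hcc]
      · rw [hs, Fin.cons_succ]
        rcases eq_or_ne (e j) q with heq | heq
        · rw [if_pos heq, Fin.cons_zero, hcc, ← heq, h1 j]
        · rw [if_neg heq, Fin.cons_succ, h1 j]
    · intro i hi
      refine Fin.cases (fun hi0 => absurd hP0 hi0) (fun j hj => ?_) i hi
      have hj' : j ∉ Finset.univ.filter (fun i : Fin n => i.succ ∈ P) := by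
        rw [Finset.mem_filter]; push_neg; intro _; exact hj
      obtain ⟨he, hc⟩ := h2 j hj'
      have hjq := hqP' j hj'
      rw [hs, Fin.cons_succ, he, if_neg hjq]
      exact ⟨rfl, hc⟩

end CondLemmas

lemma ite_and_mul_ite {A B : Prop} [Decidable A] [Decidable B] (x : ℝ) :
    (if A ∧ B then x else 0) = (if A then 1 else 0) * (if B then x else 0) := by
  by_cases hA : A <;> by_cases hB : B <;> simp [hA, hB]

lemma ite_and_mul_ite' {A B : Prop} [Decidable A] [Decidable B] (a x : ℝ) :
    (if A ∧ B then a * x else 0) = (if A then a else 0) * (if B then x else 0) := by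
  by_cases hA : A <;> by_cases hB : B <;> simp [hA, hB]

lemma key_identity (α : ℝ) :
    ∀ (n : ℕ) (w : Fin n → ℕ), (∀ i j : Fin n, i ≤ j → w j ≤ w i) → (∀ i, 1 ≤ w i) →
    ∀ P : Finset (Fin n),
    (∑ σ : Equiv.Perm (Fin n), ∑ c ∈ Fintype.piFinset (fun i => Finset.Icc 1 (w i)),
      if (∀ i, c (σ i) = c i) ∧ (∀ i, i ∉ P → σ i = i ∧ c i = 1) then Wt α σ else 0)
    = ∏ i ∈ P, (α * ((P.filter (fun j => i < j)).card : ℝ) + (w i : ℝ)) := by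
  intro n
  induction n with
  | zero =>
    intro w hw hw1 P
    have hP : P = ∅ := Finset.eq_empty_of_forall_notMem fun x _ => x.elim0
    subst hP
    rw [Finset.prod_empty]
    have h1 : ∀ σ : Equiv.Perm (Fin 0), ∀ c ∈ Fintype.piFinset (fun i : Fin 0 => Finset.Icc 1 (w i)),
        (if (∀ i, c (σ i) = c i) ∧ (∀ i, i ∉ (∅ : Finset (Fin 0)) → σ i = i ∧ c i = 1)
          then Wt α σ else 0) = 1 := fun σ c _ =>
      (if_pos ⟨fun i => i.elim0, fun i => i.elim0⟩).trans
        (by rw [show σ = 1 from Equiv.ext fun i => i.elim0, Wt_one])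
    calc (∑ σ : Equiv.Perm (Fin 0), ∑ c ∈ Fintype.piFinset (fun i : Fin 0 => Finset.Icc 1 (w i)),
          if (∀ i, c (σ i) = c i) ∧ (∀ i, i ∉ (∅ : Finset (Fin 0)) → σ i = i ∧ c i = 1)
            then Wt α σ else 0)
        = ∑ _σ : Equiv.Perm (Fin 0),
            ∑ _c ∈ Fintype.piFinset (fun i : Fin 0 => Finset.Icc 1 (w i)), (1 : ℝ) :=
          Finset.sum_congr rfl fun σ _ => Finset.sum_congr rfl (h1 σ)
      _ = 1 := by
          rw [Finset.sum_const, Finset.sum_const, Finset.card_univ, Fintype.card_piFinset]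
          simp
  | succ n ih =>
    intro w hw hw1 P
    have hw' : ∀ i j : Fin n, i ≤ j → w j.succ ≤ w i.succ :=
      fun i j hij => hw i.succ j.succ (Fin.succ_le_succ_iff.2 hij)
    have ihS := ih (fun i => w i.succ) hw' (fun i => hw1 i.succ)
      (Finset.univ.filter (fun i : Fin n => i.succ ∈ P))
    have hA : ∀ e : Equiv.Perm (Fin n),
        (∑ c ∈ Fintype.piFinset (fun i => Finset.Icc 1 (w i)),
          if (∀ i, c ((Equiv.Perm.decomposeFin.symm (0, e)) i) = c i) ∧
              (∀ i, i ∉ P → (Equiv.Perm.decomposeFin.symm (0, e)) i = i ∧ c i = 1)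
            then Wt α (Equiv.Perm.decomposeFin.symm (0, e)) else 0)
        = (if (0 : Fin (n + 1)) ∈ P then (w 0 : ℝ) else 1) *
          (∑ c' ∈ Fintype.piFinset (fun i : Fin n => Finset.Icc 1 (w i.succ)),
            if (∀ i, c' (e i) = c' i) ∧
                (∀ i, i ∉ Finset.univ.filter (fun i : Fin n => i.succ ∈ P) → e i = i ∧ c' i = 1)
              then Wt α e else 0) := by
      intro e
      rw [sum_piFinset_succ w]
      refine (Finset.sum_congr rfl fun c₀ _ => Finset.sum_congr rfl fun c' _ =>
        (if_congr (cond_zero_iff P e c₀ c') (Wt_decomposeFin_zero α e) rfl).trans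
          (ite_and_mul_ite _)).trans ?_
      rw [← Finset.sum_mul_sum]
      congr 1
      by_cases h0 : (0 : Fin (n + 1)) ∈ P
      · rw [if_pos h0]
        refine (Finset.sum_congr rfl fun c₀ _ => if_pos fun hc => absurd h0 hc).trans ?_
        rw [Finset.sum_const, Nat.card_Icc]
        simp
      · rw [if_neg h0]
        refine (Finset.sum_congr rfl fun c₀ _ =>
          if_congr ⟨fun h => h h0, fun h _ => h⟩ rfl rfl).trans ?_
        rw [Finset.sum_ite_eq' (Finset.Icc 1 (w 0)) 1 (fun _ => (1 : ℝ)),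
          if_pos (Finset.mem_Icc.2 ⟨le_refl 1, hw1 0⟩)]
    have hB : ∀ (q : Fin n) (e : Equiv.Perm (Fin n)),
        (∑ c ∈ Fintype.piFinset (fun i => Finset.Icc 1 (w i)),
          if (∀ i, c ((Equiv.Perm.decomposeFin.symm (q.succ, e)) i) = c i) ∧
              (∀ i, i ∉ P → (Equiv.Perm.decomposeFin.symm (q.succ, e)) i = i ∧ c i = 1)
            then Wt α (Equiv.Perm.decomposeFin.symm (q.succ, e)) else 0)
        = (if ((0 : Fin (n + 1)) ∈ P ∧ q.succ ∈ P) then α else 0) *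
          (∑ c' ∈ Fintype.piFinset (fun i : Fin n => Finset.Icc 1 (w i.succ)),
            if (∀ i, c' (e i) = c' i) ∧
                (∀ i, i ∉ Finset.univ.filter (fun i : Fin n => i.succ ∈ P) → e i = i ∧ c' i = 1)
              then Wt α e else 0) := by
      intro q e
      rw [sum_piFinset_succ w, Finset.sum_comm, Finset.mul_sum]
      refine Finset.sum_congr rfl fun c' hc' => ?_
      have hmem : c' q ∈ Finset.Icc 1 (w 0) := by
        have h := Fintype.mem_piFinset.1 hc' q
        rw [Finset.mem_Icc] at h ⊢
        exact ⟨h.1, le_trans h.2 (hw 0 q.succ (Fin.zero_le _))⟩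
      have hstep : ∀ c₀ : ℕ,
          (if (∀ i, (Fin.cons c₀ c' : Fin (n + 1) → ℕ)
                ((Equiv.Perm.decomposeFin.symm (q.succ, e)) i)
                = (Fin.cons c₀ c' : Fin (n + 1) → ℕ) i) ∧
              (∀ i, i ∉ P → (Equiv.Perm.decomposeFin.symm (q.succ, e)) i = i ∧
                (Fin.cons c₀ c' : Fin (n + 1) → ℕ) i = 1)
            then Wt α (Equiv.Perm.decomposeFin.symm (q.succ, e)) else 0)
          = (if c₀ = c' q then
              (if (((0 : Fin (n + 1)) ∈ P ∧ q.succ ∈ P) ∧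
                  ((∀ i, c' (e i) = c' i) ∧
                    (∀ i, i ∉ Finset.univ.filter (fun i : Fin n => i.succ ∈ P) →
                      e i = i ∧ c' i = 1)))
                then α * Wt α e else 0)
              else 0) := by
        intro c₀
        rw [if_congr (cond_succ_iff P e c₀ c' q) (Wt_decomposeFin_succ α e q) rfl]
        by_cases h1 : c₀ = c' q
        · by_cases h2 : (((0 : Fin (n + 1)) ∈ P ∧ q.succ ∈ P) ∧
              ((∀ i, c' (e i) = c' i) ∧
                (∀ i, i ∉ Finset.univ.filter (fun i : Fin n => i.succ ∈ P) →
                  e i = i ∧ c' i = 1)))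
          · rw [if_pos ⟨h2.1.1, h2.1.2, h1, h2.2⟩, if_pos h1, if_pos h2]
          · rw [if_neg (fun hc => h2 ⟨⟨hc.1, hc.2.1⟩, hc.2.2.2⟩), if_pos h1, if_neg h2]
        · rw [if_neg (fun hc => h1 hc.2.2.1), if_neg h1]
      refine (Finset.sum_congr rfl fun c₀ _ => hstep c₀).trans ?_
      rw [Finset.sum_ite_eq' (Finset.Icc 1 (w 0)) (c' q) _, if_pos hmem, ite_and_mul_ite']
    -- assemble
    have hsum_q : (∑ q : Fin n, if ((0 : Fin (n + 1)) ∈ P ∧ q.succ ∈ P) then α else 0)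
        = if (0 : Fin (n + 1)) ∈ P then
            ((Finset.univ.filter (fun i : Fin n => i.succ ∈ P)).card : ℝ) * α else 0 := by
      by_cases h0 : (0 : Fin (n + 1)) ∈ P
      · rw [if_pos h0]
        refine (Finset.sum_congr rfl fun q _ =>
          if_congr (and_iff_right h0) rfl rfl).trans ?_
        rw [← Finset.sum_filter, Finset.sum_const, nsmul_eq_mul]
      · rw [if_neg h0]
        refine (Finset.sum_congr rfl fun q _ => if_neg fun hc => h0 hc.1).trans ?_
        rw [Finset.sum_const, smul_zero]
    rw [← Equiv.sum_comp (Equiv.Perm.decomposeFin (n := n)).symm, Fintype.sum_prod_type,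
      Fin.sum_univ_succ]
    beta_reduce
    have step1 : (∑ e : Equiv.Perm (Fin n),
          ∑ c ∈ Fintype.piFinset (fun i => Finset.Icc 1 (w i)),
          if (∀ i, c ((Equiv.Perm.decomposeFin.symm (0, e)) i) = c i) ∧
              (∀ i, i ∉ P → (Equiv.Perm.decomposeFin.symm (0, e)) i = i ∧ c i = 1)
            then Wt α (Equiv.Perm.decomposeFin.symm (0, e)) else 0)
        = (if (0 : Fin (n + 1)) ∈ P then (w 0 : ℝ) else 1) *
          (∑ e : Equiv.Perm (Fin n),
            ∑ c' ∈ Fintype.piFinset (fun i : Fin n => Finset.Icc 1 (w i.succ)),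
            if (∀ i, c' (e i) = c' i) ∧
                (∀ i, i ∉ Finset.univ.filter (fun i : Fin n => i.succ ∈ P) → e i = i ∧ c' i = 1)
              then Wt α e else 0) :=
      (Finset.sum_congr rfl fun e _ => hA e).trans (Finset.mul_sum _ _ _).symm
    have step2 : (∑ q : Fin n, ∑ e : Equiv.Perm (Fin n),
          ∑ c ∈ Fintype.piFinset (fun i => Finset.Icc 1 (w i)),
          if (∀ i, c ((Equiv.Perm.decomposeFin.symm (q.succ, e)) i) = c i) ∧
              (∀ i, i ∉ P → (Equiv.Perm.decomposeFin.symm (q.succ, e)) i = i ∧ c i = 1)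
            then Wt α (Equiv.Perm.decomposeFin.symm (q.succ, e)) else 0)
        = (if (0 : Fin (n + 1)) ∈ P then
            ((Finset.univ.filter (fun i : Fin n => i.succ ∈ P)).card : ℝ) * α else 0) *
          (∑ e : Equiv.Perm (Fin n),
            ∑ c' ∈ Fintype.piFinset (fun i : Fin n => Finset.Icc 1 (w i.succ)),
            if (∀ i, c' (e i) = c' i) ∧
                (∀ i, i ∉ Finset.univ.filter (fun i : Fin n => i.succ ∈ P) → e i = i ∧ c' i = 1)
              then Wt α e else 0) := by
      refine ((Finset.sum_congr rfl fun q _ => (Finset.sum_congr rfl fun e _ => hB q e).trans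
        (Finset.mul_sum _ _ _).symm)).trans ?_
      rw [← Finset.sum_mul, hsum_q]
    rw [step1, step2, ihS]
    by_cases h0 : (0 : Fin (n + 1)) ∈ P
    · rw [if_pos h0, if_pos h0]
      rw [← Finset.mul_prod_erase P _ h0]
      have hfilter0 : P.filter (fun j => (0 : Fin (n + 1)) < j) = P.erase 0 := by
        ext x
        rw [Finset.mem_filter, Finset.mem_erase, Fin.pos_iff_ne_zero, and_comm]
      have hcard0 : ((P.filter (fun j => (0 : Fin (n + 1)) < j)).card : ℝ)
          = ((Finset.univ.filter (fun i : Fin n => i.succ ∈ P)).card : ℝ) := by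
        rw [hfilter0, erase_zero_eq_map, Finset.card_map]
      have hprod : ∏ i ∈ P.erase 0,
            (α * ((P.filter (fun j => i < j)).card : ℝ) + (w i : ℝ))
          = ∏ i ∈ Finset.univ.filter (fun i : Fin n => i.succ ∈ P),
            (α * (((Finset.univ.filter (fun i : Fin n => i.succ ∈ P)).filter
              (fun j => i < j)).card : ℝ) + (w i.succ : ℝ)) := by
        rw [erase_zero_eq_map, Finset.prod_map]
        refine Finset.prod_congr rfl fun i hi => ?_
        simp only [Function.Embedding.coeFn_mk]
        have hthis : P.filter (fun j => i.succ < j) = (P.erase 0).filter (fun j => i.succ < j) := by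
          ext x
          simp only [Finset.mem_filter, Finset.mem_erase]
          constructor
          · rintro ⟨hxP, hxl⟩
            refine ⟨⟨fun hx0 => ?_, hxP⟩, hxl⟩
            rw [hx0] at hxl
            exact (Fin.not_lt_zero _) hxl
          · rintro ⟨⟨_, hxP⟩, hxl⟩
            exact ⟨hxP, hxl⟩
        have hcnt : (P.filter (fun j => i.succ < j)).card
            = ((Finset.univ.filter (fun i : Fin n => i.succ ∈ P)).filter
                (fun j => i < j)).card := by
          rw [hthis, erase_zero_eq_map, filter_map_succ_card]
        rw [hcnt]
      rw [hprod, hcard0]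
      ring
    · rw [if_neg h0, if_neg h0]
      have hPmap : P = (Finset.univ.filter (fun i : Fin n => i.succ ∈ P)).map
          ⟨Fin.succ, Fin.succ_injective n⟩ := by
        rw [← erase_zero_eq_map, Finset.erase_eq_self.2 h0]
      have hprod : ∏ i ∈ P, (α * ((P.filter (fun j => i < j)).card : ℝ) + (w i : ℝ))
          = ∏ i ∈ Finset.univ.filter (fun i : Fin n => i.succ ∈ P),
            (α * (((Finset.univ.filter (fun i : Fin n => i.succ ∈ P)).filter
              (fun j => i < j)).card : ℝ) + (w i.succ : ℝ)) := by
        conv_lhs => rw [hPmap]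
        rw [Finset.prod_map]
        refine Finset.prod_congr rfl fun i hi => ?_
        simp only [Function.Embedding.coeFn_mk]
        rw [filter_map_succ_card]
      rw [hprod]
      ring

theorem valSuccEmb_injective (m : ℕ) : Function.Injective (fun k : Fin m => k.1 + 1) :=
  fun a b h => Fin.ext (Nat.succ_injective h)

def valSuccEmb (m : ℕ) : Fin m ↪ ℕ :=
  ⟨fun k => k.1 + 1, valSuccEmb_injective m⟩

lemma conjP_anti (L : List ℕ) {j k : ℕ} (h : j ≤ k) : conjP L k ≤ conjP L j :=
  List.Sublist.length_le (List.monotone_filter_right L (fun a ha =>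
    decide_eq_true (le_trans h (of_decide_eq_true ha))))

lemma conjP_pos (L : List ℕ) (hne : L ≠ []) {j : ℕ} (hjm : j ≤ L.headI) : 1 ≤ conjP L j := by
  have hmem : L.headI ∈ L := by
    cases L with
    | nil => exact absurd rfl hne
    | cons a t => exact List.mem_cons_self
  have : L.headI ∈ L.filter (fun p => decide (j ≤ p)) :=
    List.mem_filter.2 ⟨hmem, by simpa using hjm⟩
  exact List.length_pos_iff.2 (List.ne_nil_of_mem this)

lemma map_filter_eq (m : ℕ) (I : Finset ℕ) (hI : I ⊆ Finset.Icc 1 m) :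
    (Finset.univ.filter (fun k : Fin m => (k.1 + 1) ∈ I)).map (valSuccEmb m) = I := by
  ext x
  simp only [Finset.mem_map, Finset.mem_filter, Finset.mem_univ, true_and, valSuccEmb,
    Function.Embedding.coeFn_mk]
  constructor
  · rintro ⟨k, hk, rfl⟩
    exact hk
  · intro hx
    have hx' := Finset.mem_Icc.1 (hI hx)
    refine ⟨⟨x - 1, by omega⟩, ?_, by show x - 1 + 1 = x; omega⟩
    simpa [Nat.sub_add_cancel hx'.1] using hx

lemma sdiff_map_eq (m : ℕ) (I : Finset ℕ) (hI : I ⊆ Finset.Icc 1 m) :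
    Finset.Icc 1 m \ I
      = ((Finset.univ : Finset (Fin m)) \
          Finset.univ.filter (fun k : Fin m => (k.1 + 1) ∈ I)).map (valSuccEmb m) := by
  ext x
  simp only [Finset.mem_sdiff, Finset.mem_Icc, Finset.mem_map, Finset.mem_filter,
    Finset.mem_univ, true_and, valSuccEmb, Function.Embedding.coeFn_mk]
  constructor
  · rintro ⟨⟨h1, h2⟩, hxI⟩
    refine ⟨⟨x - 1, by omega⟩, ?_, by show x - 1 + 1 = x; omega⟩
    intro hmem
    rw [Nat.sub_add_cancel h1] at hmem
    exact hxI hmem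
  · rintro ⟨k, hk, rfl⟩
    have := k.2
    exact ⟨⟨by omega, by omega⟩, hk⟩

lemma card_filter_lt_univ (m : ℕ) (i : Fin m) :
    ((Finset.univ : Finset (Fin m)).filter (fun j => i < j)).card = m - (i.1 + 1) := by
  have h : (Finset.univ : Finset (Fin m)).filter (fun j => i < j) = Finset.Ioi i := by
    ext j
    simp
  rw [h, Fin.card_Ioi]
  omega

lemma prod_transfer (m : ℕ) (α : ℝ) (v : ℕ → ℕ) (I : Finset ℕ) (hI : I ⊆ Finset.Icc 1 m) :
    (∏ j ∈ Finset.Icc 1 m \ I,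
      (α * ((m : ℝ) - (j : ℝ) - ((I.filter fun t => j < t).card : ℝ)) + (v j : ℝ)))
    = ∏ i ∈ (Finset.univ \ Finset.univ.filter (fun k : Fin m => (k.1 + 1) ∈ I)),
        (α * ((((Finset.univ : Finset (Fin m)) \
            Finset.univ.filter (fun k : Fin m => (k.1 + 1) ∈ I)).filter
          (fun j => i < j)).card : ℝ) + (v (i.1 + 1) : ℝ)) := by
  rw [sdiff_map_eq m I hI, Finset.prod_map]
  refine Finset.prod_congr rfl fun i hi => ?_
  simp only [valSuccEmb, Function.Embedding.coeFn_mk]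
  have h1 : (I.filter fun t => i.1 + 1 < t).card
      = ((Finset.univ.filter (fun k : Fin m => (k.1 + 1) ∈ I)).filter
          (fun j => i < j)).card := by
    conv_lhs => rw [← map_filter_eq m I hI]
    rw [Finset.filter_map, Finset.card_map]
    congr 1
    refine Finset.filter_congr fun j _ => ?_
    simp only [valSuccEmb, Function.Embedding.coeFn_mk, Function.comp]
    rw [Fin.lt_def]
    omega
  have h2 : ((Finset.univ : Finset (Fin m)).filter (fun j => i < j)).card
      = (((Finset.univ : Finset (Fin m)) \
          Finset.univ.filter (fun k : Fin m => (k.1 + 1) ∈ I)).filter (fun j => i < j)).card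
        + ((Finset.univ.filter (fun k : Fin m => (k.1 + 1) ∈ I)).filter
            (fun j => i < j)).card := by
    conv_lhs => rw [← Finset.sdiff_union_of_subset
      (Finset.subset_univ (Finset.univ.filter (fun k : Fin m => (k.1 + 1) ∈ I)))]
    rw [Finset.filter_union]
    exact Finset.card_union_of_disjoint
      (Finset.disjoint_filter_filter Finset.sdiff_disjoint)
  rw [card_filter_lt_univ] at h2
  have hi2 := i.2
  have hnat : (((Finset.univ : Finset (Fin m)) \
      Finset.univ.filter (fun k : Fin m => (k.1 + 1) ∈ I)).filter (fun j => i < j)).card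
      + (I.filter fun t => i.1 + 1 < t).card + (i.1 + 1) = m := by
    rw [h1]
    omega
  have hreal := congrArg (Nat.cast : ℕ → ℝ) hnat
  push_cast at hreal
  have : (m : ℝ) - (↑(i.1 + 1) : ℝ) - ((I.filter fun t => i.1 + 1 < t).card : ℝ)
      = ((((Finset.univ : Finset (Fin m)) \
          Finset.univ.filter (fun k : Fin m => (k.1 + 1) ∈ I)).filter
            (fun j => i < j)).card : ℝ) := by
    push_cast
    linarith
  exact congrArg (fun x => α * x + (v (i.1 + 1) : ℝ)) this

lemma sum_powerset_neg_one_pow_card_real {γ : Type*} [DecidableEq γ] (s : Finset γ) :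
    (∑ I ∈ s.powerset, (-1 : ℝ) ^ I.card) = if s = ∅ then 1 else 0 := by
  have h := Finset.sum_powerset_neg_one_pow_card (x := s)
  have h2 : (((∑ I ∈ s.powerset, (-1 : ℤ) ^ I.card) : ℤ) : ℝ)
      = ∑ I ∈ s.powerset, (-1 : ℝ) ^ I.card := by
    push_cast
    rfl
  rw [← h2, h]
  split_ifs <;> simp

lemma alternating_sum_eval {m : ℕ} (α : ℝ) (w : Fin m → ℕ) :
    (∑ I ∈ (Finset.univ : Finset (Fin m)).powerset,
      (-1 : ℝ) ^ I.card *
        ∑ σ : Equiv.Perm (Fin m), ∑ c ∈ Fintype.piFinset (fun i => Finset.Icc 1 (w i)),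
          if (∀ i, c (σ i) = c i) ∧ (∀ i, i ∉ Finset.univ \ I → σ i = i ∧ c i = 1)
            then Wt α σ else 0)
    = ∑ σ : Equiv.Perm (Fin m), ∑ c ∈ Fintype.piFinset (fun i => Finset.Icc 1 (w i)),
        if (∀ i, c (σ i) = c i) ∧ (∀ i, σ i = i → c i ≠ 1) then Wt α σ else 0 := by
  refine ((Finset.sum_congr rfl fun I _ => (Finset.mul_sum _ _ _).trans
    (Finset.sum_congr rfl fun σ _ => Finset.mul_sum _ _ _)).trans ?_)
  rw [Finset.sum_comm]
  refine Finset.sum_congr rfl fun σ _ => ?_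
  rw [Finset.sum_comm]
  refine Finset.sum_congr rfl fun c _ => ?_
  by_cases hBase : (∀ i, c (σ i) = c i)
  · have hc : ∀ I : Finset (Fin m),
        ((∀ i, c (σ i) = c i) ∧ (∀ i, i ∉ Finset.univ \ I → σ i = i ∧ c i = 1))
          ↔ I ⊆ Finset.univ.filter (fun i => σ i = i ∧ c i = 1) := by
      intro I
      constructor
      · rintro ⟨_, h⟩ i hi
        exact Finset.mem_filter.2 ⟨Finset.mem_univ i, h i (by simp [hi])⟩
      · intro h
        refine ⟨hBase, fun i hi => ?_⟩
        have hiI : i ∈ I := by simpa using hi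
        exact (Finset.mem_filter.1 (h hiI)).2
    refine (Finset.sum_congr rfl fun I _ => by rw [if_congr (hc I) rfl rfl]).trans ?_
    rw [← Finset.sum_subset
      (Finset.powerset_mono.2 (Finset.subset_univ
        (Finset.univ.filter (fun i => σ i = i ∧ c i = 1))))
      (fun I _ hI => by
        rw [if_neg (fun hsub => hI (Finset.mem_powerset.2 hsub)), mul_zero])]
    refine (Finset.sum_congr rfl fun I hI => by
      rw [if_pos (Finset.mem_powerset.1 hI)]).trans ?_
    rw [← Finset.sum_mul, sum_powerset_neg_one_pow_card_real]
    have hD : (Finset.univ.filter (fun i => σ i = i ∧ c i = 1) = ∅)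
        ↔ (∀ i, σ i = i → c i ≠ 1) := by
      rw [Finset.filter_eq_empty_iff]
      constructor
      · intro h i hfix hc1
        exact h (Finset.mem_univ i) ⟨hfix, hc1⟩
      · rintro h x _ ⟨h1, h2⟩
        exact h x h1 h2
    by_cases hDer : (∀ i, σ i = i → c i ≠ 1)
    · rw [if_pos (hD.2 hDer), one_mul, if_pos ⟨hBase, hDer⟩]
    · rw [if_neg (fun h => hDer (hD.1 h)), zero_mul, if_neg (fun h => hDer h.2)]
  · refine (Finset.sum_congr rfl fun I _ => by
      rw [if_neg (fun h => hBase h.1), mul_zero]).trans ?_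
    rw [Finset.sum_const, smul_zero, if_neg (fun h => hBase h.1)]

lemma final_count (L : List ℕ) (hL : IsPartition L) (hne : L ≠ []) (α : ℝ) :
    (∑ σ : Equiv.Perm (Fin L.headI),
      ∑ c ∈ Fintype.piFinset (fun i : Fin L.headI => Finset.Icc 1 (conjP L (i.1 + 1))),
        if (∀ i, c (σ i) = c i) ∧ (∀ i, σ i = i → c i ≠ 1) then Wt α σ else 0)
    = JackD L α := by
  classical
  have hm : 0 < L.headI := by
    cases L with
    | nil => exact absurd rfl hne
    | cons a t => exact hL.2 a (List.mem_cons_self)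
  have hfix : ∀ σ : Equiv.Perm (Fin L.headI),
      (Finset.univ.filter fun i => σ i = i).card = L.headI - σ.support.card := by
    intro σ
    have h := Finset.card_filter_add_card_filter_not
      (s := (Finset.univ : Finset (Fin L.headI))) (p := fun i => σ i = i)
    have hs : σ.support = Finset.univ.filter (fun i => ¬ σ i = i) := by
      ext x
      simp [Equiv.Perm.mem_support]
    rw [← hs, Finset.card_univ, Fintype.card_fin] at h
    omega
  have hsupp_le : ∀ σ : Equiv.Perm (Fin L.headI), σ.support.card ≤ L.headI := by
    intro σ
    have := Finset.card_le_univ σ.support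
    simp only [Finset.card_univ, Fintype.card_fin] at this
    exact this
  have hWt : ∀ σ : Equiv.Perm (Fin L.headI), Wt α σ = α ^ (L.headI - cycleCount σ) := by
    intro σ
    have h1 := card_cycleType_le_card_support σ
    rw [Wt, cycleCount, hfix σ]
    congr 1
    have := hsupp_le σ
    omega
  have hcyc_mem : ∀ σ : Equiv.Perm (Fin L.headI),
      cycleCount σ ∈ Finset.Icc 1 L.headI := by
    intro σ
    rw [Finset.mem_Icc, cycleCount, hfix σ]
    constructor
    · rcases eq_or_ne σ 1 with rfl | hσ
      · have : (1 : Equiv.Perm (Fin L.headI)).support.card = 0 := by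
          simp
        omega
      · have : 0 < Multiset.card σ.cycleType := by
          rw [Nat.pos_iff_ne_zero]
          intro h
          exact hσ (Equiv.Perm.card_cycleType_eq_zero.1 h)
        omega
    · have h1 := card_cycleType_le_card_support σ
      have h2 := hsupp_le σ
      omega
  calc (∑ σ : Equiv.Perm (Fin L.headI),
      ∑ c ∈ Fintype.piFinset (fun i : Fin L.headI => Finset.Icc 1 (conjP L (i.1 + 1))),
        if (∀ i, c (σ i) = c i) ∧ (∀ i, σ i = i → c i ≠ 1) then Wt α σ else 0)
      = ∑ σ : Equiv.Perm (Fin L.headI),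
          ∑ c ∈ Fintype.piFinset (fun i : Fin L.headI => Finset.Icc 1 (conjP L (i.1 + 1))),
            if (∀ i, c (σ i) = c i) ∧ (∀ i, σ i = i → c i ≠ 1)
              then α ^ (L.headI - cycleCount σ) else 0 :=
        Finset.sum_congr rfl fun σ _ => Finset.sum_congr rfl fun c _ => by rw [hWt σ]
    _ = ∑ c ∈ Fintype.piFinset (fun i : Fin L.headI => Finset.Icc 1 (conjP L (i.1 + 1))),
          ∑ σ : Equiv.Perm (Fin L.headI),
            if (∀ i, c (σ i) = c i) ∧ (∀ i, σ i = i → c i ≠ 1)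
              then α ^ (L.headI - cycleCount σ) else 0 := Finset.sum_comm
    _ = ∑ x ∈ (Fintype.piFinset (fun i : Fin L.headI => Finset.Icc 1 (conjP L (i.1 + 1)))) ×ˢ
            (Finset.univ : Finset (Equiv.Perm (Fin L.headI))),
          if (∀ i, x.1 (x.2 i) = x.1 i) ∧ (∀ i, x.2 i = i → x.1 i ≠ 1)
            then α ^ (L.headI - cycleCount x.2) else 0 :=
        (Finset.sum_product _ _ (fun x : (Fin L.headI → ℕ) × Equiv.Perm (Fin L.headI) =>
          if (∀ i, x.1 (x.2 i) = x.1 i) ∧ (∀ i, x.2 i = i → x.1 i ≠ 1)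
            then α ^ (L.headI - cycleCount x.2) else 0)).symm
    _ = ∑ x ∈ ((Fintype.piFinset (fun i : Fin L.headI => Finset.Icc 1 (conjP L (i.1 + 1)))) ×ˢ
            (Finset.univ : Finset (Equiv.Perm (Fin L.headI)))).filter
            (fun x => (∀ i, x.1 (x.2 i) = x.1 i) ∧ (∀ i, x.2 i = i → x.1 i ≠ 1)),
          α ^ (L.headI - cycleCount x.2) := (Finset.sum_filter _ _).symm
    _ = ∑ k ∈ Finset.Icc 1 L.headI,
          ∑ x ∈ (((Fintype.piFinset (fun i : Fin L.headI =>
              Finset.Icc 1 (conjP L (i.1 + 1)))) ×ˢ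
            (Finset.univ : Finset (Equiv.Perm (Fin L.headI)))).filter
            (fun x => (∀ i, x.1 (x.2 i) = x.1 i) ∧ (∀ i, x.2 i = i → x.1 i ≠ 1))).filter
            (fun x => cycleCount x.2 = k),
          α ^ (L.headI - cycleCount x.2) :=
        (Finset.sum_fiberwise_of_maps_to (fun x _ => hcyc_mem x.2) _).symm
    _ = ∑ k ∈ Finset.Icc 1 L.headI,
          ((((((Fintype.piFinset (fun i : Fin L.headI =>
              Finset.Icc 1 (conjP L (i.1 + 1)))) ×ˢ
            (Finset.univ : Finset (Equiv.Perm (Fin L.headI)))).filter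
            (fun x => (∀ i, x.1 (x.2 i) = x.1 i) ∧ (∀ i, x.2 i = i → x.1 i ≠ 1))).filter
            (fun x => cycleCount x.2 = k)).card : ℝ)) * α ^ (L.headI - k) :=
        Finset.sum_congr rfl fun k _ => by
          refine (Finset.sum_congr rfl fun x hx => by
            rw [(Finset.mem_filter.1 hx).2]).trans ?_
          rw [Finset.sum_const, nsmul_eq_mul]
    _ = JackD L α := by
        rw [JackD]
        refine Finset.sum_congr rfl fun k _ => ?_
        congr 2
        have hset : {x : (Fin L.headI → ℕ) × Equiv.Perm (Fin L.headI) |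
            x ∈ ColoredDerangements L ∧ cycleCount x.2 = k}
            = ↑(((Fintype.piFinset (fun i : Fin L.headI =>
                Finset.Icc 1 (conjP L (i.1 + 1)))) ×ˢ
                (Finset.univ : Finset (Equiv.Perm (Fin L.headI)))).filter
              (fun x => ((∀ i, x.1 (x.2 i) = x.1 i) ∧ (∀ i, x.2 i = i → x.1 i ≠ 1)) ∧
                cycleCount x.2 = k)) := by
          ext x
          simp only [Set.mem_setOf_eq, Finset.coe_filter, Finset.mem_product,
            Fintype.mem_piFinset, Finset.mem_Icc, Finset.mem_univ, and_true,
            ColoredDerangements, ColoredPerms, Set.mem_setOf_eq]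
          constructor
          · rintro ⟨⟨⟨hb, hmono⟩, hder⟩, hcyc⟩
            exact ⟨fun i => hb i, ⟨⟨hmono, hder⟩, hcyc⟩⟩
          · rintro ⟨hb, ⟨⟨hmono, hder⟩, hcyc⟩⟩
            exact ⟨⟨⟨fun i => hb i, hmono⟩, hder⟩, hcyc⟩
        rw [Finset.filter_filter, dCount, hset, Set.ncard_coe_finset]

/-- Main theorem, combinatorial form. -/
theorem main_theorem_combinatorial (L : List ℕ) (hL : IsPartition L) (hne : L ≠ [])
    (α : ℝ) :
    ∑ I ∈ (Finset.Icc 1 L.headI).powerset,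
      (-1 : ℝ) ^ I.card *
        ∏ j ∈ Finset.Icc 1 L.headI \ I,
          (α * ((L.headI : ℝ) - (j : ℝ) - (((I.filter fun i => j < i)).card : ℝ))
              + (conjP L j : ℝ)) = JackD L α := by
  classical
  have hw : ∀ i j : Fin L.headI, i ≤ j → conjP L (j.1 + 1) ≤ conjP L (i.1 + 1) :=
    fun i j hij => conjP_anti L (by
      rw [Fin.le_def] at hij
      omega)
  have hw1 : ∀ i : Fin L.headI, 1 ≤ conjP L (i.1 + 1) :=
    fun i => conjP_pos L hne (by
      have := i.2
      omega)
  have step1 : (∑ I ∈ (Finset.Icc 1 L.headI).powerset,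
      (-1 : ℝ) ^ I.card *
        ∏ j ∈ Finset.Icc 1 L.headI \ I,
          (α * ((L.headI : ℝ) - (j : ℝ) - (((I.filter fun i => j < i)).card : ℝ))
              + (conjP L j : ℝ)))
      = ∑ I ∈ (Finset.univ : Finset (Fin L.headI)).powerset,
        (-1 : ℝ) ^ I.card *
          ∏ i ∈ Finset.univ \ I,
            (α * (((Finset.univ \ I).filter (fun j => i < j)).card : ℝ)
              + (conjP L (i.1 + 1) : ℝ)) := by
    refine Finset.sum_nbij'
      (fun I => Finset.univ.filter (fun k : Fin L.headI => (k.1 + 1) ∈ I))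
      (fun I' => I'.map (valSuccEmb L.headI)) ?_ ?_ ?_ ?_ ?_
    · intro I _
      exact Finset.mem_powerset.2 (Finset.subset_univ _)
    · intro I' _
      refine Finset.mem_powerset.2 fun x hx => ?_
      obtain ⟨k, _, rfl⟩ := Finset.mem_map.1 hx
      have := k.2
      simp only [valSuccEmb, Function.Embedding.coeFn_mk]
      rw [Finset.mem_Icc]
      omega
    · intro I hI
      exact map_filter_eq L.headI I (Finset.mem_powerset.1 hI)
    · intro I' _
      ext k
      simp only [Finset.mem_filter, Finset.mem_univ, true_and, Finset.mem_map, valSuccEmb,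
        Function.Embedding.coeFn_mk]
      constructor
      · rintro ⟨a, ha, haa⟩
        have : a = k := Fin.ext (Nat.succ_injective haa)
        rwa [← this]
      · intro hk
        exact ⟨k, hk, rfl⟩
    · intro I hI
      have hIsub := Finset.mem_powerset.1 hI
      rw [show I.card = (Finset.univ.filter
          (fun k : Fin L.headI => (k.1 + 1) ∈ I)).card from by
        conv_lhs => rw [← map_filter_eq L.headI I hIsub]
        rw [Finset.card_map]]
      rw [prod_transfer L.headI α (conjP L) I hIsub]
  rw [step1]
  have step2 : ∀ I' : Finset (Fin L.headI),
      (∏ i ∈ Finset.univ \ I',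
        (α * (((Finset.univ \ I').filter (fun j => i < j)).card : ℝ)
          + (conjP L (i.1 + 1) : ℝ)))
      = ∑ σ : Equiv.Perm (Fin L.headI),
          ∑ c ∈ Fintype.piFinset (fun i : Fin L.headI => Finset.Icc 1 (conjP L (i.1 + 1))),
            if (∀ i, c (σ i) = c i) ∧ (∀ i, i ∉ Finset.univ \ I' → σ i = i ∧ c i = 1)
              then Wt α σ else 0 :=
    fun I' => (key_identity α L.headI (fun i => conjP L (i.1 + 1)) hw hw1
      (Finset.univ \ I')).symm
  refine ((Finset.sum_congr rfl fun I' _ => by rw [step2 I']).trans ?_)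
  rw [alternating_sum_eval α (fun i : Fin L.headI => conjP L (i.1 + 1))]
  exact final_count L hL hne α
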